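/- Let R₀ = √(7 − √33)/2 and let x ∈ ℝ² with ‖x‖² ≤ 1/50. With ρ_{R₀} and φ_{R₀} as given, define S(x)(y,z) := D²ρ_{R₀}(x)(y,z) − ⟪∇φ_{R₀}(x),y⟫·⟪∇ρ_{R₀}(x),z⟫ − ⟪∇φ_{R₀}(x),z⟫·⟪∇ρ_{R₀}(x),y⟫ + ⟪∇φ_{R₀}(x),∇ρ_{R₀}(x)⟫·⟪y,z⟫. Then for every y ∈ ℝ², S(x)(y,y) ≤ ( 8 / (R₀²·(1−‖x‖²)²) )·‖y‖². -/

import Mathlib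

open scoped RealInnerProductSpace

/-- The weight from the Poincaré disk model rewritten over the stereographic chart
of the sphere of radius `R`. -/
noncomputable def rhoR (R : ℝ) (x : EuclideanSpace ℝ (Fin 2)) : ℝ :=
  (R ^ 2 + ‖x‖ ^ 2) ^ 2 / (R ^ 4 * (1 - ‖x‖ ^ 2) ^ 2)

/-- The conformal factor of the spherical metric of radius `R` in stereographic
coordinates. -/
noncomputable def phiR (R : ℝ) (x : EuclideanSpace ℝ (Fin 2)) : ℝ :=
  Real.log (2 * R ^ 2 / (R ^ 2 + ‖x‖ ^ 2))

/-- The Hessian of `rhoR` with respect to the conformal (spherical) metric,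
computed via `Hess_g̃ F = Hess_g F − 2 dφ ⊗ dF + (∇φ·∇F) g`. -/
noncomputable def sphericalHess (R : ℝ) (x y z : EuclideanSpace ℝ (Fin 2)) : ℝ :=
  fderiv ℝ (fderiv ℝ (rhoR R)) x y z -
    ⟪gradient (phiR R) x, y⟫ * ⟪gradient (rhoR R) x, z⟫ -
    ⟪gradient (phiR R) x, z⟫ * ⟪gradient (rhoR R) x, y⟫ +
    ⟪gradient (phiR R) x, gradient (rhoR R) x⟫ * ⟪y, z⟫

noncomputable section
namespace SHB

local notation "E" => EuclideanSpace ℝ (Fin 2)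

/-- The inner product as a continuous bilinear map on `ℝ²`. -/
def Bmap : E →L[ℝ] E →L[ℝ] ℝ := (isBoundedBilinearMap_inner (𝕜 := ℝ)).toContinuousLinearMap

@[simp] lemma Bmap_apply (x y : E) : Bmap x y = ⟪x, y⟫ := rfl

lemma hasFDerivAt_normSq (x : E) :
    HasFDerivAt (fun y : E => ‖y‖ ^ 2) (2 • Bmap x) x := by
  have h := ((hasFDerivAt_id x).inner ℝ (hasFDerivAt_id x))
  have h2 : HasFDerivAt (fun y : E => (⟪y, y⟫ : ℝ)) (2 • Bmap x) x := by
    refine h.congr_fderiv ?_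
    ext y
    simp [fderivInnerCLM_apply, real_inner_comm, two_smul]
  have hfun : (fun y : E => ‖y‖ ^ 2) = fun y : E => (⟪y, y⟫ : ℝ) := by
    ext y; rw [real_inner_self_eq_norm_sq]
  rw [hfun]; exact h2

/-- Scalar profile of `rhoR` and its first and second derivatives. -/
def fR (R t : ℝ) : ℝ := (R ^ 2 + t) ^ 2 / (R ^ 4 * (1 - t) ^ 2)
def fR' (R t : ℝ) : ℝ := 2 * (R ^ 2 + t) * (1 + R ^ 2) / (R ^ 4 * (1 - t) ^ 3)
def fR'' (R t : ℝ) : ℝ := 2 * (1 + R ^ 2) * (1 + 3 * R ^ 2 + 2 * t) / (R ^ 4 * (1 - t) ^ 4)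

lemma hasDerivAt_fR {R t : ℝ} (hR : R ≠ 0) (ht : t ≠ 1) :
    HasDerivAt (fR R) (fR' R t) t := by
  have h1t : (1 : ℝ) - t ≠ 0 := sub_ne_zero_of_ne (Ne.symm ht)
  have hd : R ^ 4 * (1 - t) ^ 2 ≠ 0 := by positivity
  have h1 : HasDerivAt (fun t : ℝ => (R ^ 2 + t) ^ 2) (2 * (R ^ 2 + t)) t := by
    simpa using ((hasDerivAt_id t).const_add (R ^ 2)).fun_pow 2
  have h2 : HasDerivAt (fun t : ℝ => R ^ 4 * (1 - t) ^ 2)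
      (R ^ 4 * (2 * (1 - t) * (0 - 1))) t := by
    simpa using (((hasDerivAt_const t (1:ℝ)).sub (hasDerivAt_id t)).fun_pow 2).const_mul (R ^ 4)
  have := h1.div h2 hd
  refine this.congr_deriv ?_
  unfold fR'
  field_simp
  ring

lemma hasDerivAt_fR' {R t : ℝ} (hR : R ≠ 0) (ht : t ≠ 1) :
    HasDerivAt (fR' R) (fR'' R t) t := by
  have h1t : (1 : ℝ) - t ≠ 0 := sub_ne_zero_of_ne (Ne.symm ht)
  have hd : R ^ 4 * (1 - t) ^ 3 ≠ 0 := by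
    apply mul_ne_zero (by positivity) (pow_ne_zero _ h1t)
  have h1 : HasDerivAt (fun t : ℝ => 2 * (R ^ 2 + t) * (1 + R ^ 2))
      (2 * (1 + R ^ 2)) t := by
    have : HasDerivAt (fun t : ℝ => 2 * (R ^ 2 + t) * (1 + R ^ 2)) (2 * 1 * (1 + R ^ 2)) t :=
      (((hasDerivAt_id t).const_add (R ^ 2)).const_mul 2).mul_const _
    simpa using this
  have h2 : HasDerivAt (fun t : ℝ => R ^ 4 * (1 - t) ^ 3)
      (R ^ 4 * (3 * (1 - t) ^ 2 * (0 - 1))) t := by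
    simpa using (((hasDerivAt_const t (1:ℝ)).sub (hasDerivAt_id t)).fun_pow 3).const_mul (R ^ 4)
  have := h1.div h2 hd
  refine this.congr_deriv ?_
  unfold fR''
  field_simp
  ring

lemma hasDerivAt_gR {R t : ℝ} (hR : R ≠ 0) (hrt : 0 < R ^ 2 + t) :
    HasDerivAt (fun t => Real.log (2 * R ^ 2 / (R ^ 2 + t))) (-1 / (R ^ 2 + t)) t := by
  have hu : HasDerivAt (fun t : ℝ => 2 * R ^ 2 / (R ^ 2 + t))
      ((0 * (R ^ 2 + t) - 2 * R ^ 2 * 1) / (R ^ 2 + t) ^ 2) t :=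
    (hasDerivAt_const t (2 * R ^ 2)).div ((hasDerivAt_id t).const_add (R ^ 2)) hrt.ne'
  have hne : 2 * R ^ 2 / (R ^ 2 + t) ≠ 0 := by positivity
  have := hu.log hne
  convert this using 1
  field_simp
  ring

/-- Frechet derivative of `rhoR` as a function of the point. -/
def Phi (R : ℝ) (z : E) : E →L[ℝ] ℝ := fR' R (‖z‖ ^ 2) • (2 • Bmap z)

lemma hasFDerivAt_rhoR {R : ℝ} (hR : R ≠ 0) {z : E} (hz : ‖z‖ ^ 2 ≠ 1) :
    HasFDerivAt (rhoR R) (Phi R z) z :=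
  by have := (hasDerivAt_fR hR hz).comp_hasFDerivAt z (hasFDerivAt_normSq z); exact this

lemma hasFDerivAt_Phi {R : ℝ} (hR : R ≠ 0) {z : E} (hz : ‖z‖ ^ 2 ≠ 1) :
    HasFDerivAt (Phi R)
      (fR' R (‖z‖ ^ 2) • (2 • Bmap) +
        ((fR'' R (‖z‖ ^ 2)) • (2 • Bmap z)).smulRight (2 • Bmap z)) z := by
  have hc : HasFDerivAt (fun w : E => fR' R (‖w‖ ^ 2))
      ((fR'' R (‖z‖ ^ 2)) • (2 • Bmap z)) z :=
    by have := (hasDerivAt_fR' hR hz).comp_hasFDerivAt z (hasFDerivAt_normSq z); exact this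
  have hL : HasFDerivAt (fun w : E => (2 • Bmap) w) (2 • Bmap) z :=
    (2 • Bmap).hasFDerivAt
  exact hc.smul hL

lemma fderiv2_eq {R : ℝ} (hR : R ≠ 0) {z : E} (hz : ‖z‖ ^ 2 < 1) :
    fderiv ℝ (fderiv ℝ (rhoR R)) z =
      fR' R (‖z‖ ^ 2) • (2 • Bmap) +
        ((fR'' R (‖z‖ ^ 2)) • (2 • Bmap z)).smulRight (2 • Bmap z) := by
  have hU : IsOpen {w : E | ‖w‖ ^ 2 < 1} :=
    isOpen_lt (by fun_prop) continuous_const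
  have hev : fderiv ℝ (rhoR R) =ᶠ[nhds z] Phi R := by
    filter_upwards [hU.mem_nhds hz] with w hw
    exact (hasFDerivAt_rhoR hR (ne_of_lt hw)).fderiv
  rw [hev.fderiv_eq]
  exact (hasFDerivAt_Phi hR (ne_of_lt hz)).fderiv

lemma gradient_rhoR {R : ℝ} (hR : R ≠ 0) {z : E} (hz : ‖z‖ ^ 2 ≠ 1) :
    gradient (rhoR R) z = (2 * fR' R (‖z‖ ^ 2)) • z := by
  have h : HasGradientAt (rhoR R) ((2 * fR' R (‖z‖ ^ 2)) • z) z := by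
    rw [hasGradientAt_iff_hasFDerivAt]
    refine (hasFDerivAt_rhoR hR hz).congr_fderiv ?_
    ext y
    simp [Phi, InnerProductSpace.toDual_apply_apply, real_inner_smul_left, two_smul]
    ring
  exact h.gradient

lemma gradient_phiR {R : ℝ} (hR : R ≠ 0) (z : E) :
    gradient (phiR R) z = (2 * (-1 / (R ^ 2 + ‖z‖ ^ 2))) • z := by
  have hrt : 0 < R ^ 2 + ‖z‖ ^ 2 := by positivity
  have hf : HasFDerivAt (phiR R) ((-1 / (R ^ 2 + ‖z‖ ^ 2)) • (2 • Bmap z)) z :=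
    by have := (hasDerivAt_gR hR hrt).comp_hasFDerivAt z (hasFDerivAt_normSq z); exact this
  have h : HasGradientAt (phiR R) ((2 * (-1 / (R ^ 2 + ‖z‖ ^ 2))) • z) z := by
    rw [hasGradientAt_iff_hasFDerivAt]
    refine hf.congr_fderiv ?_
    ext y
    simp [InnerProductSpace.toDual_apply_apply, real_inner_smul_left, two_smul]
    ring
  exact h.gradient

/-- The key elementary inequality. -/
lemma arith {r t s ny : ℝ} (hr1 : 31/100 ≤ r) (hr2 : r ≤ 63/200)
    (ht0 : 0 ≤ t) (ht : t ≤ 1/50) (hny : 0 ≤ ny) (hs : s ^ 2 ≤ t * ny) :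
    2 * (r + t) * (1 + r) / (r ^ 2 * (1 - t) ^ 3) * (2 * ny) +
        2 * (1 + r) * (1 + 3 * r + 2 * t) / (r ^ 2 * (1 - t) ^ 4) * (2 * s) * (2 * s) -
      2 * (-1 / (r + t)) * s * (2 * (2 * (r + t) * (1 + r) / (r ^ 2 * (1 - t) ^ 3)) * s) -
      2 * (-1 / (r + t)) * s * (2 * (2 * (r + t) * (1 + r) / (r ^ 2 * (1 - t) ^ 3)) * s) +
      2 * (2 * (r + t) * (1 + r) / (r ^ 2 * (1 - t) ^ 3)) * (2 * (-1 / (r + t)) * t) * ny ≤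
    8 / (r * (1 - t) ^ 2) * ny := by
  have hr0 : (0:ℝ) < r := by linarith
  have h1t : (0:ℝ) < 1 - t := by linarith
  have hrt : (0:ℝ) < r + t := by linarith
  rw [← sub_nonneg]
  have expand : 8 / (r * (1 - t) ^ 2) * ny -
      (2 * (r + t) * (1 + r) / (r ^ 2 * (1 - t) ^ 3) * (2 * ny) +
        2 * (1 + r) * (1 + 3 * r + 2 * t) / (r ^ 2 * (1 - t) ^ 4) * (2 * s) * (2 * s) -
      2 * (-1 / (r + t)) * s * (2 * (2 * (r + t) * (1 + r) / (r ^ 2 * (1 - t) ^ 3)) * s) -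
      2 * (-1 / (r + t)) * s * (2 * (2 * (r + t) * (1 + r) / (r ^ 2 * (1 - t) ^ 3)) * s) +
      2 * (2 * (r + t) * (1 + r) / (r ^ 2 * (1 - t) ^ 3)) * (2 * (-1 / (r + t)) * t) * ny) =
      (8 * r * (1 - t) ^ 2 * (r + t) * ny - 4 * (1 + r) * (1 - t) * (r + t) * (r - t) * ny
        - 24 * (1 + r) ^ 2 * (r + t) * s ^ 2) / (r ^ 2 * (1 - t) ^ 4 * (r + t)) := by
    field_simp
    ring
  rw [expand]
  apply div_nonneg _ (by positivity)
  have hP : 0 ≤ 2 * r * (1 - t) ^ 2 - (1 + r) * (1 - t) * (r - t) - 6 * (1 + r) ^ 2 * t := by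
    nlinarith
  have hs' : 24 * (1 + r) ^ 2 * (r + t) * s ^ 2 ≤ 24 * (1 + r) ^ 2 * (r + t) * (t * ny) := by
    have h24 : (0:ℝ) ≤ 24 * (1 + r) ^ 2 * (r + t) := by positivity
    exact mul_le_mul_of_nonneg_left hs h24
  nlinarith [mul_nonneg (mul_nonneg (by linarith : (0:ℝ) ≤ 4 * (r + t)) hny) hP, hs']

end SHB
end

open SHB in
theorem spherical_hessian_bound_at_R₀
    (x : EuclideanSpace ℝ (Fin 2)) (hx : ‖x‖ ^ 2 ≤ 1 / 50) :
    ∀ y : EuclideanSpace ℝ (Fin 2),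
      sphericalHess (Real.sqrt (7 - Real.sqrt 33) / 2) x y y ≤
        8 / ((Real.sqrt (7 - Real.sqrt 33) / 2) ^ 2 * (1 - ‖x‖ ^ 2) ^ 2) * ‖y‖ ^ 2 := by
  intro y
  set R : ℝ := Real.sqrt (7 - Real.sqrt 33) / 2 with hRdef
  have h33u : Real.sqrt 33 ≤ 5.76 := by
    rw [show (5.76:ℝ) = Real.sqrt (5.76^2) by rw [Real.sqrt_sq]; norm_num]
    exact Real.sqrt_le_sqrt (by norm_num)
  have h33l : (5.74:ℝ) ≤ Real.sqrt 33 := by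
    rw [show (5.74:ℝ) = Real.sqrt (5.74^2) by rw [Real.sqrt_sq]; norm_num]
    exact Real.sqrt_le_sqrt (by norm_num)
  have hR2 : R ^ 2 = (7 - Real.sqrt 33) / 4 := by
    rw [hRdef, div_pow, Real.sq_sqrt (by linarith)]
    norm_num
  have hr1 : 31/100 ≤ R ^ 2 := by rw [hR2]; linarith
  have hr2 : R ^ 2 ≤ 63/200 := by rw [hR2]; linarith
  have hR0 : R ≠ 0 := by
    intro h; rw [h] at hr1; norm_num at hr1
  have ht1 : ‖x‖ ^ 2 < 1 := lt_of_le_of_lt hx (by norm_num)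
  have hs : (⟪x, y⟫ : ℝ) ^ 2 ≤ ‖x‖ ^ 2 * ‖y‖ ^ 2 := by
    have h := abs_real_inner_le_norm x y
    nlinarith [abs_nonneg (⟪x, y⟫ : ℝ), sq_abs (⟪x, y⟫ : ℝ), norm_nonneg x, norm_nonneg y]
  rw [sphericalHess, fderiv2_eq hR0 ht1, gradient_rhoR hR0 (ne_of_lt ht1), gradient_phiR hR0 x]
  simp only [ContinuousLinearMap.add_apply, ContinuousLinearMap.smul_apply,
    ContinuousLinearMap.smulRight_apply, Bmap_apply, smul_eq_mul,
    real_inner_smul_left, real_inner_smul_right, real_inner_self_eq_norm_sq,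
    nsmul_eq_mul, Nat.cast_ofNat]
  unfold SHB.fR' SHB.fR''
  rw [show (R:ℝ)^4 = (R^2)^2 by ring]
  exact SHB.arith hr1 hr2 (sq_nonneg _) hx (sq_nonneg _) hs
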